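/- Let H = A #_ψ^φ B be a cross product bialgebra over a commutative ring k. If the identity map of A has a convolution inverse S : A → A (in Hom(A,A) with convolution from the coalgebra A and algebra A) and the identity map of B has a convolution inverse s : B → B, then H is a Hopf algebra with antipode given by 𝒮 = ψ ∘ (s ⊗ S) ∘ φ : A⊗B → A⊗B; that is, 𝒮(a⊗b) = ψ((s⊗S)(φ(a⊗b))) satisfies the antipode axioms Σ 𝒮(h₁)h₂ = ε(h)1 = Σ h₁𝒮(h₂) for all h ∈ H. -/

import Mathlib

set_option maxHeartbeats 1000000
set_option synthInstance.maxHeartbeats 400000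
set_option linter.unusedSectionVars false


open TensorProduct

variable {k A B : Type*} [CommRing k] [Ring A] [Ring B] [Algebra k A] [Algebra k B]
  [Coalgebra k A] [Coalgebra k B]

/-- The cross product multiplication on `A ⊗ B` induced by `ψ : B ⊗ A → A ⊗ B`. -/
noncomputable def crossMul (ψ : B ⊗[k] A →ₗ[k] A ⊗[k] B) :
    (A ⊗[k] B) ⊗[k] (A ⊗[k] B) →ₗ[k] A ⊗[k] B :=
  TensorProduct.map (LinearMap.mul' k A) (LinearMap.mul' k B) ∘ₗ
    (TensorProduct.assoc k (A ⊗[k] A) B B).toLinearMap ∘ₗ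
    TensorProduct.map
      ((TensorProduct.assoc k A A B).symm.toLinearMap ∘ₗ
        TensorProduct.map (LinearMap.id : A →ₗ[k] A) ψ ∘ₗ
        (TensorProduct.assoc k A B A).toLinearMap)
      (LinearMap.id : B →ₗ[k] B) ∘ₗ
    (TensorProduct.assoc k (A ⊗[k] B) A B).symm.toLinearMap

/-- (a): `ψ ∘ (m_B ⊗ id_A) = (id_A ⊗ m_B) ∘ (ψ ⊗ id_B) ∘ (id_B ⊗ ψ)`. -/
def psiCondA (ψ : B ⊗[k] A →ₗ[k] A ⊗[k] B) : Prop :=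
  ψ ∘ₗ TensorProduct.map (LinearMap.mul' k B) (LinearMap.id : A →ₗ[k] A) =
    TensorProduct.map (LinearMap.id : A →ₗ[k] A) (LinearMap.mul' k B) ∘ₗ
      (TensorProduct.assoc k A B B).toLinearMap ∘ₗ
      TensorProduct.map ψ (LinearMap.id : B →ₗ[k] B) ∘ₗ
      (TensorProduct.assoc k B A B).symm.toLinearMap ∘ₗ
      TensorProduct.map (LinearMap.id : B →ₗ[k] B) ψ ∘ₗ
      (TensorProduct.assoc k B B A).toLinearMap

/-- (b): `ψ ∘ (id_B ⊗ m_A) = (m_A ⊗ id_B) ∘ (id_A ⊗ ψ) ∘ (ψ ⊗ id_A)`. -/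
def psiCondB (ψ : B ⊗[k] A →ₗ[k] A ⊗[k] B) : Prop :=
  ψ ∘ₗ TensorProduct.map (LinearMap.id : B →ₗ[k] B) (LinearMap.mul' k A) =
    TensorProduct.map (LinearMap.mul' k A) (LinearMap.id : B →ₗ[k] B) ∘ₗ
      (TensorProduct.assoc k A A B).symm.toLinearMap ∘ₗ
      TensorProduct.map (LinearMap.id : A →ₗ[k] A) ψ ∘ₗ
      (TensorProduct.assoc k A B A).toLinearMap ∘ₗ
      TensorProduct.map ψ (LinearMap.id : A →ₗ[k] A) ∘ₗ
      (TensorProduct.assoc k B A A).symm.toLinearMap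

/-- (c): `ψ(b ⊗ 1_A) = 1_A ⊗ b`. -/
def psiCondC (ψ : B ⊗[k] A →ₗ[k] A ⊗[k] B) : Prop :=
  ∀ b : B, ψ (b ⊗ₜ[k] (1 : A)) = (1 : A) ⊗ₜ[k] b

/-- (d): `ψ(1_B ⊗ a) = a ⊗ 1_B`. -/
def psiCondD (ψ : B ⊗[k] A →ₗ[k] A ⊗[k] B) : Prop :=
  ∀ a : A, ψ ((1 : B) ⊗ₜ[k] a) = a ⊗ₜ[k] (1 : B)

/-- The cross coproduct comultiplication on `A ⊗ B` induced by `φ : A ⊗ B → B ⊗ A`. -/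
noncomputable def crossComul (φ : A ⊗[k] B →ₗ[k] B ⊗[k] A) :
    A ⊗[k] B →ₗ[k] (A ⊗[k] B) ⊗[k] (A ⊗[k] B) :=
  (TensorProduct.assoc k (A ⊗[k] B) A B).toLinearMap ∘ₗ
    TensorProduct.map
      ((TensorProduct.assoc k A B A).symm.toLinearMap ∘ₗ
        TensorProduct.map (LinearMap.id : A →ₗ[k] A) φ ∘ₗ
        (TensorProduct.assoc k A A B).toLinearMap)
      (LinearMap.id : B →ₗ[k] B) ∘ₗ
    (TensorProduct.assoc k (A ⊗[k] A) B B).symm.toLinearMap ∘ₗ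
    TensorProduct.map (Coalgebra.comul (R := k) (A := A)) (Coalgebra.comul (R := k) (A := B))

/-- The counit `ε_A ⊗ ε_B` on `A ⊗ B`. -/
noncomputable def crossCounit : A ⊗[k] B →ₗ[k] k :=
  (TensorProduct.lid k k).toLinearMap ∘ₗ
    TensorProduct.map (Coalgebra.counit (R := k) (A := A)) (Coalgebra.counit (R := k) (A := B))

/-- (a): `(Δ_B ⊗ id_A) ∘ φ = (id_B ⊗ φ) ∘ (φ ⊗ id_B) ∘ (id_A ⊗ Δ_B)`. -/
def phiCondA (φ : A ⊗[k] B →ₗ[k] B ⊗[k] A) : Prop :=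
  TensorProduct.map (Coalgebra.comul (R := k) (A := B)) (LinearMap.id : A →ₗ[k] A) ∘ₗ φ =
    (TensorProduct.assoc k B B A).symm.toLinearMap ∘ₗ
      TensorProduct.map (LinearMap.id : B →ₗ[k] B) φ ∘ₗ
      (TensorProduct.assoc k B A B).toLinearMap ∘ₗ
      TensorProduct.map φ (LinearMap.id : B →ₗ[k] B) ∘ₗ
      (TensorProduct.assoc k A B B).symm.toLinearMap ∘ₗ
      TensorProduct.map (LinearMap.id : A →ₗ[k] A) (Coalgebra.comul (R := k) (A := B))

/-- (b): `(id_B ⊗ Δ_A) ∘ φ = (φ ⊗ id_A) ∘ (id_A ⊗ φ) ∘ (Δ_A ⊗ id_B)`. -/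
def phiCondB (φ : A ⊗[k] B →ₗ[k] B ⊗[k] A) : Prop :=
  TensorProduct.map (LinearMap.id : B →ₗ[k] B) (Coalgebra.comul (R := k) (A := A)) ∘ₗ φ =
    (TensorProduct.assoc k B A A).toLinearMap ∘ₗ
      TensorProduct.map φ (LinearMap.id : A →ₗ[k] A) ∘ₗ
      (TensorProduct.assoc k A B A).symm.toLinearMap ∘ₗ
      TensorProduct.map (LinearMap.id : A →ₗ[k] A) φ ∘ₗ
      (TensorProduct.assoc k A A B).toLinearMap ∘ₗ
      TensorProduct.map (Coalgebra.comul (R := k) (A := A)) (LinearMap.id : B →ₗ[k] B)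

/-- (c): `(id_B ⊗ ε_A) ∘ φ = ε_A ⊗ id_B`. -/
def phiCondC (φ : A ⊗[k] B →ₗ[k] B ⊗[k] A) : Prop :=
  (TensorProduct.rid k B).toLinearMap ∘ₗ
      TensorProduct.map (LinearMap.id : B →ₗ[k] B) (Coalgebra.counit (R := k) (A := A)) ∘ₗ φ =
    (TensorProduct.lid k B).toLinearMap ∘ₗ
      TensorProduct.map (Coalgebra.counit (R := k) (A := A)) (LinearMap.id : B →ₗ[k] B)

/-- (d): `(ε_B ⊗ id_A) ∘ φ = id_A ⊗ ε_B`. -/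
def phiCondD (φ : A ⊗[k] B →ₗ[k] B ⊗[k] A) : Prop :=
  (TensorProduct.lid k A).toLinearMap ∘ₗ
      TensorProduct.map (Coalgebra.counit (R := k) (A := B)) (LinearMap.id : A →ₗ[k] A) ∘ₗ φ =
    (TensorProduct.rid k A).toLinearMap ∘ₗ
      TensorProduct.map (LinearMap.id : A →ₗ[k] A) (Coalgebra.counit (R := k) (A := B))

/-- `A ⊗ B` with the cross product multiplication induced by `ψ`, unit `1 ⊗ 1`, the cross
coproduct comultiplication induced by `φ` and counit `ε_A ⊗ ε_B` is a bialgebra. -/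
def IsCrossBialgebra (ψ : B ⊗[k] A →ₗ[k] A ⊗[k] B) (φ : A ⊗[k] B →ₗ[k] B ⊗[k] A) : Prop :=
  (∀ x y z : A ⊗[k] B,
      crossMul ψ (crossMul ψ (x ⊗ₜ[k] y) ⊗ₜ[k] z) =
        crossMul ψ (x ⊗ₜ[k] crossMul ψ (y ⊗ₜ[k] z))) ∧
  (∀ x : A ⊗[k] B, crossMul ψ (((1 : A) ⊗ₜ[k] (1 : B)) ⊗ₜ[k] x) = x) ∧
  (∀ x : A ⊗[k] B, crossMul ψ (x ⊗ₜ[k] ((1 : A) ⊗ₜ[k] (1 : B))) = x) ∧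
  ((TensorProduct.assoc k (A ⊗[k] B) (A ⊗[k] B) (A ⊗[k] B)).toLinearMap ∘ₗ
      TensorProduct.map (crossComul φ) (LinearMap.id : A ⊗[k] B →ₗ[k] A ⊗[k] B) ∘ₗ
        crossComul φ =
      TensorProduct.map (LinearMap.id : A ⊗[k] B →ₗ[k] A ⊗[k] B) (crossComul φ) ∘ₗ
        crossComul φ) ∧
  ((TensorProduct.lid k (A ⊗[k] B)).toLinearMap ∘ₗ
      TensorProduct.map (crossCounit (k := k) (A := A) (B := B))
        (LinearMap.id : A ⊗[k] B →ₗ[k] A ⊗[k] B) ∘ₗ crossComul φ = LinearMap.id) ∧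
  ((TensorProduct.rid k (A ⊗[k] B)).toLinearMap ∘ₗ
      TensorProduct.map (LinearMap.id : A ⊗[k] B →ₗ[k] A ⊗[k] B)
        (crossCounit (k := k) (A := A) (B := B)) ∘ₗ crossComul φ = LinearMap.id) ∧
  (crossComul φ ((1 : A) ⊗ₜ[k] (1 : B)) =
      ((1 : A) ⊗ₜ[k] (1 : B)) ⊗ₜ[k] ((1 : A) ⊗ₜ[k] (1 : B))) ∧
  (crossCounit (k := k) (A := A) (B := B) ((1 : A) ⊗ₜ[k] (1 : B)) = 1) ∧
  (crossComul φ ∘ₗ crossMul ψ =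
      TensorProduct.map (crossMul ψ) (crossMul ψ) ∘ₗ
        (TensorProduct.tensorTensorTensorComm k (A ⊗[k] B) (A ⊗[k] B) (A ⊗[k] B)
          (A ⊗[k] B)).toLinearMap ∘ₗ
        TensorProduct.map (crossComul φ) (crossComul φ)) ∧
  (crossCounit (k := k) (A := A) (B := B) ∘ₗ crossMul ψ =
      LinearMap.mul' k k ∘ₗ
        TensorProduct.map (crossCounit (k := k) (A := A) (B := B))
          (crossCounit (k := k) (A := A) (B := B)))

namespace CrossAux

lemma crossMul_tmul (ψ : B ⊗[k] A →ₗ[k] A ⊗[k] B) (a c : A) (b d : B) :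
    crossMul ψ ((a ⊗ₜ[k] b) ⊗ₜ[k] (c ⊗ₜ[k] d)) =
      TensorProduct.map (LinearMap.mulLeft k a) (LinearMap.mulRight k d) (ψ (b ⊗ₜ[k] c)) := by
  simp only [crossMul, LinearMap.coe_comp, LinearEquiv.coe_coe, Function.comp_apply,
    assoc_symm_tmul, map_tmul, LinearMap.id_coe, id_eq, assoc_tmul]
  generalize ψ (b ⊗ₜ[k] c) = t
  induction t using TensorProduct.induction_on with
  | zero => simp [tmul_zero, zero_tmul]
  | tmul x y => simp [assoc_symm_tmul, assoc_tmul, LinearMap.mul'_apply,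
      LinearMap.mulLeft_apply, LinearMap.mulRight_apply]
  | add x y hx hy => simp only [tmul_add, add_tmul, map_add, hx, hy]

lemma crossCounit_tmul (a : A) (b : B) :
    crossCounit (k := k) (a ⊗ₜ[k] b) =
      Coalgebra.counit (R := k) a * Coalgebra.counit (R := k) b := by
  simp [crossCounit]

lemma crossComul_tmul (φ : A ⊗[k] B →ₗ[k] B ⊗[k] A) (a : A) (b : B)
    (ra : Coalgebra.Repr k a (A × A)) (rb : Coalgebra.Repr k b (B × B)) :
    crossComul φ (a ⊗ₜ[k] b) =
      ∑ i ∈ ra.index, ∑ j ∈ rb.index,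
        TensorProduct.map (TensorProduct.mk k A B (ra.left i))
          ((TensorProduct.mk k A B).flip (rb.right j))
          (φ (ra.right i ⊗ₜ[k] rb.left j)) := by
  simp only [crossComul, LinearMap.coe_comp, LinearEquiv.coe_coe, Function.comp_apply,
    map_tmul]
  rw [← ra.eq, ← rb.eq]
  rw [sum_tmul]
  simp only [tmul_sum, map_sum]
  refine Finset.sum_congr rfl fun i _ => Finset.sum_congr rfl fun j _ => ?_
  simp only [assoc_symm_tmul, map_tmul, LinearMap.id_coe, id_eq, LinearMap.coe_comp,
    LinearEquiv.coe_coe, Function.comp_apply, assoc_tmul]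
  generalize φ (ra.right i ⊗ₜ[k] rb.left j) = t
  induction t using TensorProduct.induction_on with
  | zero => simp [tmul_zero, zero_tmul]
  | tmul x y => simp [assoc_symm_tmul, assoc_tmul, mk_apply, LinearMap.flip_apply]
  | add x y hx hy => simp only [tmul_add, add_tmul, map_add, hx, hy]

end CrossAux

namespace CrossAux

/-- `Dmap (b ⊗ a) = ε b • a`. -/
noncomputable def Dmap : B ⊗[k] A →ₗ[k] A :=
  (TensorProduct.lid k A).toLinearMap ∘ₗ
    TensorProduct.map (Coalgebra.counit (R := k) (A := B)) (LinearMap.id)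

@[simp] lemma Dmap_tmul (b : B) (a : A) :
    Dmap (b ⊗ₜ[k] a) = Coalgebra.counit (R := k) b • a := by simp [Dmap]

/-- `Emap (b ⊗ a) = ε a • b`. -/
noncomputable def Emap : B ⊗[k] A →ₗ[k] B :=
  (TensorProduct.rid k B).toLinearMap ∘ₗ
    TensorProduct.map (LinearMap.id) (Coalgebra.counit (R := k) (A := A))

@[simp] lemma Emap_tmul (b : B) (a : A) :
    Emap (b ⊗ₜ[k] a) = Coalgebra.counit (R := k) a • b := by simp [Emap]

noncomputable def cA : A →ₗ[k] A := Algebra.linearMap k A ∘ₗ (Coalgebra.counit (R := k) (A := A))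
noncomputable def cB : B →ₗ[k] B := Algebra.linearMap k B ∘ₗ (Coalgebra.counit (R := k) (A := B))

@[simp] lemma cA_apply (a : A) : cA (k := k) a = Coalgebra.counit (R := k) a • (1 : A) := by
  simp [cA, Algebra.algebraMap_eq_smul_one]

@[simp] lemma cB_apply (b : B) : cB (k := k) b = Coalgebra.counit (R := k) b • (1 : B) := by
  simp [cB, Algebra.algebraMap_eq_smul_one]

section reprs
variable {C : Type*} [Ring C] [Algebra k C] [Coalgebra k C]

lemma sum_counit_smul_right {c : C} (r : Coalgebra.Repr k c (C × C)) :
    ∑ i ∈ r.index, Coalgebra.counit (R := k) (r.left i) • r.right i = c := by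
  have h := congrArg (TensorProduct.lid k C) (Coalgebra.sum_counit_tmul_eq r)
  simp only [map_sum, lid_tmul, one_smul] at h
  exact h

lemma sum_smul_counit_left {c : C} (r : Coalgebra.Repr k c (C × C)) :
    ∑ i ∈ r.index, Coalgebra.counit (R := k) (r.right i) • r.left i = c := by
  have h := congrArg (TensorProduct.rid k C) (Coalgebra.sum_tmul_counit_eq r)
  simp only [map_sum, rid_tmul, one_smul] at h
  exact h

lemma sum_mul_left {c : C} (r : Coalgebra.Repr k c (C × C)) (f : C →ₗ[k] C)
    (hf : LinearMap.mul' k C ∘ₗ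
        TensorProduct.map f (LinearMap.id : C →ₗ[k] C) ∘ₗ
        Coalgebra.comul (R := k) (A := C) =
      Algebra.linearMap k C ∘ₗ Coalgebra.counit (R := k) (A := C)) :
    ∑ i ∈ r.index, f (r.left i) * r.right i = Coalgebra.counit (R := k) c • (1 : C) := by
  have h := LinearMap.congr_fun hf c
  simp only [LinearMap.coe_comp, Function.comp_apply] at h
  rw [← r.eq] at h
  simpa [map_sum, LinearMap.mul'_apply, Algebra.algebraMap_eq_smul_one] using h

lemma sum_mul_right {c : C} (r : Coalgebra.Repr k c (C × C)) (f : C →ₗ[k] C)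
    (hf : LinearMap.mul' k C ∘ₗ
        TensorProduct.map (LinearMap.id : C →ₗ[k] C) f ∘ₗ
        Coalgebra.comul (R := k) (A := C) =
      Algebra.linearMap k C ∘ₗ Coalgebra.counit (R := k) (A := C)) :
    ∑ i ∈ r.index, r.left i * f (r.right i) = Coalgebra.counit (R := k) c • (1 : C) := by
  have h := LinearMap.congr_fun hf c
  simp only [LinearMap.coe_comp, Function.comp_apply] at h
  rw [← r.eq] at h
  simpa [map_sum, LinearMap.mul'_apply, Algebra.algebraMap_eq_smul_one] using h

end reprs

section collapse
variable {M N P : Type*} [AddCommGroup M] [Module k M] [AddCommGroup N] [Module k N]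
  [AddCommGroup P] [Module k P] {ι₁ ι₂ : Type*}

lemma collapse₂ (s₁ : Finset ι₁) (s₂ : Finset ι₂) (c : ι₁ → k) (d : ι₂ → k)
    (x : ι₁ → M) (y : ι₂ → N) (G : M ⊗[k] N →ₗ[k] P) :
    ∑ i ∈ s₁, ∑ j ∈ s₂, (c i * d j) • G (x i ⊗ₜ[k] y j) =
      G ((∑ i ∈ s₁, c i • x i) ⊗ₜ[k] (∑ j ∈ s₂, d j • y j)) := by
  rw [sum_tmul]
  simp only [tmul_sum, map_sum, smul_tmul_smul, map_smul]

lemma collapse₂' (s₁ : Finset ι₁) (s₂ : Finset ι₂) (c : ι₁ → k) (d : ι₂ → k)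
    (x : ι₁ → M) (y : ι₂ → N) (G : M ⊗[k] N →ₗ[k] P) :
    ∑ i ∈ s₁, ∑ j ∈ s₂, (d j * c i) • G (x i ⊗ₜ[k] y j) =
      G ((∑ i ∈ s₁, c i • x i) ⊗ₜ[k] (∑ j ∈ s₂, d j • y j)) := by
  rw [← collapse₂ s₁ s₂ c d x y G]
  simp only [mul_comm]

lemma collapseL (s₁ : Finset ι₁) (s₂ : Finset ι₂) (c : ι₁ → k)
    (x : ι₁ → M) (y : ι₂ → N) (G : M ⊗[k] N →ₗ[k] P) :
    ∑ i ∈ s₁, ∑ j ∈ s₂, c i • G (x i ⊗ₜ[k] y j) =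
      G ((∑ i ∈ s₁, c i • x i) ⊗ₜ[k] (∑ j ∈ s₂, y j)) := by
  rw [sum_tmul]
  simp only [tmul_sum, map_sum, ← smul_tmul', map_smul]

lemma collapseR (s₁ : Finset ι₁) (s₂ : Finset ι₂) (d : ι₂ → k)
    (x : ι₁ → M) (y : ι₂ → N) (G : M ⊗[k] N →ₗ[k] P) :
    ∑ i ∈ s₁, ∑ j ∈ s₂, d j • G (x i ⊗ₜ[k] y j) =
      G ((∑ i ∈ s₁, x i) ⊗ₜ[k] (∑ j ∈ s₂, d j • y j)) := by
  rw [sum_tmul]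
  simp only [tmul_sum, map_sum, tmul_smul, map_smul]


end collapse

end CrossAux

namespace CrossAux

variable (ψ : B ⊗[k] A →ₗ[k] A ⊗[k] B) (φ : A ⊗[k] B →ₗ[k] B ⊗[k] A)

lemma psiD_of (h2 : ∀ x : A ⊗[k] B, crossMul ψ (((1 : A) ⊗ₜ[k] (1 : B)) ⊗ₜ[k] x) = x) :
    ∀ a : A, ψ ((1 : B) ⊗ₜ[k] a) = a ⊗ₜ[k] (1 : B) := by
  intro a
  have h := h2 (a ⊗ₜ[k] (1 : B))
  rw [crossMul_tmul] at h
  simpa [LinearMap.mulLeft_one, LinearMap.mulRight_one, TensorProduct.map_id] using h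

lemma psiC_of (h3 : ∀ x : A ⊗[k] B, crossMul ψ (x ⊗ₜ[k] ((1 : A) ⊗ₜ[k] (1 : B))) = x) :
    ∀ b : B, ψ (b ⊗ₜ[k] (1 : A)) = (1 : A) ⊗ₜ[k] b := by
  intro b
  have h := h3 ((1 : A) ⊗ₜ[k] b)
  rw [crossMul_tmul] at h
  simpa [LinearMap.mulLeft_one, LinearMap.mulRight_one, TensorProduct.map_id] using h

lemma mul_oneB_left (hD : ∀ a : A, ψ ((1 : B) ⊗ₜ[k] a) = a ⊗ₜ[k] (1 : B))
    (x y : A) (d : B) :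
    crossMul ψ ((x ⊗ₜ[k] (1 : B)) ⊗ₜ[k] (y ⊗ₜ[k] d)) = (x * y) ⊗ₜ[k] d := by
  rw [crossMul_tmul, hD]; simp

lemma mul_oneA_right (hC : ∀ b : B, ψ (b ⊗ₜ[k] (1 : A)) = (1 : A) ⊗ₜ[k] b)
    (x : A) (b d : B) :
    crossMul ψ ((x ⊗ₜ[k] b) ⊗ₜ[k] ((1 : A) ⊗ₜ[k] d)) = x ⊗ₜ[k] (b * d) := by
  rw [crossMul_tmul, hC]; simp

lemma mul_psi (b : B) (y : A) :
    crossMul ψ (((1 : A) ⊗ₜ[k] b) ⊗ₜ[k] (y ⊗ₜ[k] (1 : B))) = ψ (b ⊗ₜ[k] y) := by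
  rw [crossMul_tmul]
  simp [LinearMap.mulLeft_one, LinearMap.mulRight_one, TensorProduct.map_id]

end CrossAux

namespace CrossAux

noncomputable def iA : A ⊗[k] B →ₗ[k] A ⊗[k] B := TensorProduct.map LinearMap.id cB
noncomputable def iB : A ⊗[k] B →ₗ[k] A ⊗[k] B := TensorProduct.map cA LinearMap.id
noncomputable def jA (S : A →ₗ[k] A) : A ⊗[k] B →ₗ[k] A ⊗[k] B := TensorProduct.map S cB
noncomputable def jB (s : B →ₗ[k] B) : A ⊗[k] B →ₗ[k] A ⊗[k] B := TensorProduct.map cA s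

variable (ψ : B ⊗[k] A →ₗ[k] A ⊗[k] B)

lemma termF (S : A →ₗ[k] A) (s : B →ₗ[k] B) (a₁ : A) (b₂ : B) (t : B ⊗[k] A) :
    crossMul ψ (TensorProduct.map (jB s) (jA S)
        (TensorProduct.map (TensorProduct.mk k A B a₁) ((TensorProduct.mk k A B).flip b₂) t)) =
      (Coalgebra.counit (R := k) a₁ * Coalgebra.counit (R := k) b₂) •
        ψ (TensorProduct.map s S t) := by
  induction t using TensorProduct.induction_on with
  | zero => simp
  | tmul β α =>
    simp only [map_tmul, jB, jA, cA_apply, cB_apply, mk_apply, LinearMap.flip_apply]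
    rw [← smul_tmul', tmul_smul, smul_tmul_smul, map_smul, mul_psi]
  | add x y hx hy => simp only [map_add, smul_add, hx, hy]

end CrossAux

namespace CrossAux

variable (ψ : B ⊗[k] A →ₗ[k] A ⊗[k] B)

lemma termA (hD : ∀ a : A, ψ ((1 : B) ⊗ₜ[k] a) = a ⊗ₜ[k] (1 : B))
    (a₁ : A) (b₂ : B) (t : B ⊗[k] A) :
    crossMul ψ (TensorProduct.map iA iB
        (TensorProduct.map (TensorProduct.mk k A B a₁) ((TensorProduct.mk k A B).flip b₂) t)) =
      Coalgebra.counit (R := k) (Dmap t) • (a₁ ⊗ₜ[k] b₂) := by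
  induction t using TensorProduct.induction_on with
  | zero => simp
  | tmul β α =>
    simp only [map_tmul, iA, iB, cA_apply, cB_apply, mk_apply, LinearMap.flip_apply,
      LinearMap.id_coe, id_eq, Dmap_tmul, map_smul, smul_eq_mul]
    simp only [smul_tmul, tmul_smul, smul_smul, map_smul]
    rw [mul_oneB_left ψ hD]
    try simp only [one_mul, mul_one]
    try module
  | add x y hx hy => simp only [map_add, add_smul, hx, hy]

lemma termB (hD : ∀ a : A, ψ ((1 : B) ⊗ₜ[k] a) = a ⊗ₜ[k] (1 : B)) (S : A →ₗ[k] A)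
    (a₁ : A) (b₂ : B) (t : B ⊗[k] A) :
    crossMul ψ (TensorProduct.map (jA S) iA
        (TensorProduct.map (TensorProduct.mk k A B a₁) ((TensorProduct.mk k A B).flip b₂) t)) =
      Coalgebra.counit (R := k) b₂ • ((S a₁ * Dmap t) ⊗ₜ[k] (1 : B)) := by
  induction t using TensorProduct.induction_on with
  | zero => simp
  | tmul β α =>
    simp only [map_tmul, jA, iA, cA_apply, cB_apply, mk_apply, LinearMap.flip_apply,
      LinearMap.id_coe, id_eq, Dmap_tmul, mul_smul_comm]
    simp only [smul_tmul, tmul_smul, smul_smul, map_smul]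
    rw [mul_oneB_left ψ hD]
    try simp only [one_mul, mul_one]
    try module
  | add x y hx hy => simp only [map_add, smul_add, mul_add, add_tmul, hx, hy]

lemma termC (hD : ∀ a : A, ψ ((1 : B) ⊗ₜ[k] a) = a ⊗ₜ[k] (1 : B)) (S : A →ₗ[k] A)
    (a₁ : A) (b₂ : B) (t : B ⊗[k] A) :
    crossMul ψ (TensorProduct.map iA (jA S)
        (TensorProduct.map (TensorProduct.mk k A B a₁) ((TensorProduct.mk k A B).flip b₂) t)) =
      Coalgebra.counit (R := k) b₂ • ((a₁ * S (Dmap t)) ⊗ₜ[k] (1 : B)) := by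
  induction t using TensorProduct.induction_on with
  | zero => simp
  | tmul β α =>
    simp only [map_tmul, jA, iA, cA_apply, cB_apply, mk_apply, LinearMap.flip_apply,
      LinearMap.id_coe, id_eq, Dmap_tmul, map_smul, mul_smul_comm]
    simp only [smul_tmul, tmul_smul, smul_smul, map_smul]
    rw [mul_oneB_left ψ hD]
    try simp only [one_mul, mul_one]
    try module
  | add x y hx hy => simp only [map_add, smul_add, mul_add, add_tmul, hx, hy]

lemma termD (hC : ∀ b : B, ψ (b ⊗ₜ[k] (1 : A)) = (1 : A) ⊗ₜ[k] b) (s : B →ₗ[k] B)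
    (a₁ : A) (b₂ : B) (t : B ⊗[k] A) :
    crossMul ψ (TensorProduct.map (jB s) iB
        (TensorProduct.map (TensorProduct.mk k A B a₁) ((TensorProduct.mk k A B).flip b₂) t)) =
      Coalgebra.counit (R := k) a₁ • ((1 : A) ⊗ₜ[k] (s (Emap t) * b₂)) := by
  induction t using TensorProduct.induction_on with
  | zero => simp
  | tmul β α =>
    simp only [map_tmul, jB, iB, cA_apply, cB_apply, mk_apply, LinearMap.flip_apply,
      LinearMap.id_coe, id_eq, Emap_tmul, map_smul, smul_mul_assoc]
    simp only [smul_tmul, tmul_smul, smul_smul, map_smul]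
    rw [mul_oneA_right ψ hC]
    try simp only [one_mul, mul_one]
    try module
  | add x y hx hy => simp only [map_add, smul_add, add_mul, tmul_add, hx, hy]

lemma termE (hC : ∀ b : B, ψ (b ⊗ₜ[k] (1 : A)) = (1 : A) ⊗ₜ[k] b) (s : B →ₗ[k] B)
    (a₁ : A) (b₂ : B) (t : B ⊗[k] A) :
    crossMul ψ (TensorProduct.map iB (jB s)
        (TensorProduct.map (TensorProduct.mk k A B a₁) ((TensorProduct.mk k A B).flip b₂) t)) =
      Coalgebra.counit (R := k) a₁ • ((1 : A) ⊗ₜ[k] (Emap t * s b₂)) := by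
  induction t using TensorProduct.induction_on with
  | zero => simp
  | tmul β α =>
    simp only [map_tmul, jB, iB, cA_apply, cB_apply, mk_apply, LinearMap.flip_apply,
      LinearMap.id_coe, id_eq, Emap_tmul, smul_mul_assoc]
    simp only [smul_tmul, tmul_smul, smul_smul, map_smul]
    rw [mul_oneA_right ψ hC]
    try simp only [one_mul, mul_one]
    try module
  | add x y hx hy => simp only [map_add, smul_add, add_mul, tmul_add, hx, hy]

lemma termEpsL (a₁ : A) (b₂ : B) (t : B ⊗[k] A) :
    (TensorProduct.lid k (A ⊗[k] B))
        (TensorProduct.map (crossCounit (k := k) (A := A) (B := B)) LinearMap.id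
          (TensorProduct.map (TensorProduct.mk k A B a₁) ((TensorProduct.mk k A B).flip b₂) t)) =
      Coalgebra.counit (R := k) a₁ • (Dmap t ⊗ₜ[k] b₂) := by
  induction t using TensorProduct.induction_on with
  | zero => simp
  | tmul β α =>
    simp only [map_tmul, mk_apply, LinearMap.flip_apply, LinearMap.id_coe, id_eq,
      crossCounit_tmul, Dmap_tmul, lid_tmul]
    simp only [smul_tmul, tmul_smul, smul_smul]
    try module
  | add x y hx hy => simp only [map_add, smul_add, add_tmul, hx, hy]

lemma termEpsR (a₁ : A) (b₂ : B) (t : B ⊗[k] A) :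
    (TensorProduct.rid k (A ⊗[k] B))
        (TensorProduct.map LinearMap.id (crossCounit (k := k) (A := A) (B := B))
          (TensorProduct.map (TensorProduct.mk k A B a₁) ((TensorProduct.mk k A B).flip b₂) t)) =
      Coalgebra.counit (R := k) b₂ • (a₁ ⊗ₜ[k] Emap t) := by
  induction t using TensorProduct.induction_on with
  | zero => simp
  | tmul β α =>
    simp only [map_tmul, mk_apply, LinearMap.flip_apply, LinearMap.id_coe, id_eq,
      crossCounit_tmul, Emap_tmul, rid_tmul]
    simp only [smul_tmul, tmul_smul, smul_smul]
    try module
  | add x y hx hy => simp only [map_add, smul_add, tmul_add, hx, hy]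

end CrossAux

namespace CrossAux

variable (ψ : B ⊗[k] A →ₗ[k] A ⊗[k] B) (φ : A ⊗[k] B →ₗ[k] B ⊗[k] A)

/-- `GP (x ⊗ (z ⊗ w)) = Dmap (φ (x ⊗ z)) ⊗ w`. -/
noncomputable def GP : A ⊗[k] (B ⊗[k] B) →ₗ[k] A ⊗[k] B :=
  TensorProduct.map (Dmap ∘ₗ φ) LinearMap.id ∘ₗ (TensorProduct.assoc k A B B).symm.toLinearMap

@[simp] lemma GP_tmul (x : A) (z w : B) :
    GP φ (x ⊗ₜ[k] (z ⊗ₜ[k] w)) = Dmap (φ (x ⊗ₜ[k] z)) ⊗ₜ[k] w := by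
  simp [GP]

/-- `GQ ((x ⊗ y) ⊗ z) = x ⊗ Emap (φ (y ⊗ z))`. -/
noncomputable def GQ : (A ⊗[k] A) ⊗[k] B →ₗ[k] A ⊗[k] B :=
  TensorProduct.map LinearMap.id (Emap ∘ₗ φ) ∘ₗ (TensorProduct.assoc k A A B).toLinearMap

@[simp] lemma GQ_tmul (x y : A) (z : B) :
    GQ φ ((x ⊗ₜ[k] y) ⊗ₜ[k] z) = x ⊗ₜ[k] Emap (φ (y ⊗ₜ[k] z)) := by
  simp [GQ]

lemma star1 (h5 : (TensorProduct.lid k (A ⊗[k] B)).toLinearMap ∘ₗ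
      TensorProduct.map (crossCounit (k := k) (A := A) (B := B))
        (LinearMap.id : A ⊗[k] B →ₗ[k] A ⊗[k] B) ∘ₗ crossComul φ = LinearMap.id)
    (a : A) (b : B) : GP φ (a ⊗ₜ[k] Coalgebra.comul (R := k) b) = a ⊗ₜ[k] b := by
  have ra := Coalgebra.Repr.arbitrary k a
  have rb := Coalgebra.Repr.arbitrary k b
  have h := LinearMap.congr_fun h5 (a ⊗ₜ[k] b)
  simp only [LinearMap.coe_comp, LinearEquiv.coe_coe, Function.comp_apply, LinearMap.id_coe,
    id_eq] at h
  rw [crossComul_tmul φ a b ra rb] at h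
  simp only [map_sum] at h
  simp only [termEpsL] at h
  have hc := collapseL (k := k) ra.index rb.index
    (fun i => Coalgebra.counit (R := k) (ra.left i))
    (fun i => ra.right i) (fun j => rb.left j ⊗ₜ[k] rb.right j) (GP φ)
  simp only [GP_tmul] at hc
  rw [hc, sum_counit_smul_right ra, rb.eq] at h
  exact h

lemma star2 (h6 : (TensorProduct.rid k (A ⊗[k] B)).toLinearMap ∘ₗ
      TensorProduct.map (LinearMap.id : A ⊗[k] B →ₗ[k] A ⊗[k] B)
        (crossCounit (k := k) (A := A) (B := B)) ∘ₗ crossComul φ = LinearMap.id)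
    (a : A) (b : B) : GQ φ (Coalgebra.comul (R := k) a ⊗ₜ[k] b) = a ⊗ₜ[k] b := by
  have ra := Coalgebra.Repr.arbitrary k a
  have rb := Coalgebra.Repr.arbitrary k b
  have h := LinearMap.congr_fun h6 (a ⊗ₜ[k] b)
  simp only [LinearMap.coe_comp, LinearEquiv.coe_coe, Function.comp_apply, LinearMap.id_coe,
    id_eq] at h
  rw [crossComul_tmul φ a b ra rb] at h
  simp only [map_sum] at h
  simp only [termEpsR] at h
  have hc := collapseR (k := k) ra.index rb.index
    (fun j => Coalgebra.counit (R := k) (rb.right j))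
    (fun i => ra.left i ⊗ₜ[k] ra.right i) (fun j => rb.left j) (GQ φ)
  simp only [GQ_tmul] at hc
  rw [hc, sum_smul_counit_left rb, ra.eq] at h
  exact h

lemma phiD_of (h5 : (TensorProduct.lid k (A ⊗[k] B)).toLinearMap ∘ₗ
      TensorProduct.map (crossCounit (k := k) (A := A) (B := B))
        (LinearMap.id : A ⊗[k] B →ₗ[k] A ⊗[k] B) ∘ₗ crossComul φ = LinearMap.id) :
    ∀ (x : A) (y : B), Dmap (φ (x ⊗ₜ[k] y)) = Coalgebra.counit (R := k) y • x := by
  intro x y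
  have h := congrArg ((TensorProduct.rid k A).toLinearMap ∘ₗ
    TensorProduct.map (LinearMap.id : A →ₗ[k] A) (Coalgebra.counit (R := k) (A := B)))
    (star1 φ h5 x y)
  simp only [LinearMap.coe_comp, Function.comp_apply, map_tmul, LinearMap.id_coe, id_eq,
    rid_tmul] at h
  have key : ∀ t : B ⊗[k] B,
      (TensorProduct.rid k A).toLinearMap
        (TensorProduct.map (LinearMap.id : A →ₗ[k] A) (Coalgebra.counit (R := k) (A := B))
          (GP φ (x ⊗ₜ[k] t))) =
      Dmap (φ (x ⊗ₜ[k] ((TensorProduct.rid k B)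
        (TensorProduct.map (LinearMap.id : B →ₗ[k] B) (Coalgebra.counit (R := k) (A := B)) t)))) := by
    intro t
    induction t using TensorProduct.induction_on with
    | zero => simp
    | tmul z w => simp [tmul_smul, map_smul]
    | add u v hu hv => simp only [map_add, tmul_add, hu, hv]
  rw [key] at h
  have hb : (TensorProduct.rid k B)
      (TensorProduct.map (LinearMap.id : B →ₗ[k] B) (Coalgebra.counit (R := k) (A := B))
        (Coalgebra.comul (R := k) y)) = y := by
    have h2 : ∀ t : B ⊗[k] B,
        TensorProduct.map (LinearMap.id : B →ₗ[k] B) (Coalgebra.counit (R := k) (A := B)) t =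
          LinearMap.lTensor B (Coalgebra.counit (R := k) (A := B)) t := by
      intro t
      induction t using TensorProduct.induction_on with
      | zero => simp
      | tmul z w => simp
      | add u v hu hv => simp only [map_add, hu, hv]
    rw [h2, Coalgebra.lTensor_counit_comul]
    simp
  rw [hb] at h
  exact h

lemma phiC_of (h6 : (TensorProduct.rid k (A ⊗[k] B)).toLinearMap ∘ₗ
      TensorProduct.map (LinearMap.id : A ⊗[k] B →ₗ[k] A ⊗[k] B)
        (crossCounit (k := k) (A := A) (B := B)) ∘ₗ crossComul φ = LinearMap.id) :
    ∀ (x : A) (y : B), Emap (φ (x ⊗ₜ[k] y)) = Coalgebra.counit (R := k) x • y := by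
  intro x y
  have h := congrArg ((TensorProduct.lid k B).toLinearMap ∘ₗ
    TensorProduct.map (Coalgebra.counit (R := k) (A := A)) (LinearMap.id : B →ₗ[k] B))
    (star2 φ h6 x y)
  simp only [LinearMap.coe_comp, Function.comp_apply, map_tmul, LinearMap.id_coe, id_eq,
    lid_tmul] at h
  have key : ∀ t : A ⊗[k] A,
      (TensorProduct.lid k B).toLinearMap
        (TensorProduct.map (Coalgebra.counit (R := k) (A := A)) (LinearMap.id : B →ₗ[k] B)
          (GQ φ (t ⊗ₜ[k] y))) =
      Emap (φ (((TensorProduct.lid k A)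
        (TensorProduct.map (Coalgebra.counit (R := k) (A := A)) (LinearMap.id : A →ₗ[k] A) t))
          ⊗ₜ[k] y)) := by
    intro t
    induction t using TensorProduct.induction_on with
    | zero => simp
    | tmul z w =>
      simp only [GQ_tmul, map_tmul, LinearMap.id_coe, id_eq, lid_tmul, LinearEquiv.coe_coe]
      rw [← smul_tmul', map_smul, map_smul]
    | add u v hu hv => simp only [map_add, add_tmul, hu, hv]
  rw [key] at h
  have ha : (TensorProduct.lid k A)
      (TensorProduct.map (Coalgebra.counit (R := k) (A := A)) (LinearMap.id : A →ₗ[k] A)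
        (Coalgebra.comul (R := k) x)) = x := by
    have h2 : ∀ t : A ⊗[k] A,
        TensorProduct.map (Coalgebra.counit (R := k) (A := A)) (LinearMap.id : A →ₗ[k] A) t =
          LinearMap.rTensor A (Coalgebra.counit (R := k) (A := A)) t := by
      intro t
      induction t using TensorProduct.induction_on with
      | zero => simp
      | tmul z w => simp
      | add u v hu hv => simp only [map_add, hu, hv]
    rw [h2, Coalgebra.rTensor_counit_comul]
    simp
  rw [ha] at h
  exact h

end CrossAux

namespace CrossAux

variable (ψ : B ⊗[k] A →ₗ[k] A ⊗[k] B) (φ : A ⊗[k] B →ₗ[k] B ⊗[k] A)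

/-- Convolution product on `Hom(H, H)` for `H = A ⊗ B`. -/
noncomputable def conv (f g : A ⊗[k] B →ₗ[k] A ⊗[k] B) : A ⊗[k] B →ₗ[k] A ⊗[k] B :=
  crossMul ψ ∘ₗ TensorProduct.map f g ∘ₗ crossComul φ

/-- The convolution unit `h ↦ ε(h) • 1⊗1`. -/
noncomputable def eH : A ⊗[k] B →ₗ[k] A ⊗[k] B :=
  LinearMap.toSpanSingleton k (A ⊗[k] B) ((1 : A) ⊗ₜ[k] (1 : B)) ∘ₗ
    crossCounit (k := k) (A := A) (B := B)

lemma eH_apply (x : A ⊗[k] B) :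
    eH x = crossCounit (k := k) (A := A) (B := B) x • ((1 : A) ⊗ₜ[k] (1 : B)) := by
  simp [eH, LinearMap.toSpanSingleton_apply]

lemma conv_apply (f g : A ⊗[k] B →ₗ[k] A ⊗[k] B) (x : A ⊗[k] B) :
    conv ψ φ f g x = crossMul ψ (TensorProduct.map f g (crossComul φ x)) := rfl

section identities

variable (S : A →ₗ[k] A) (s : B →ₗ[k] B)
variable (hC : ∀ b : B, ψ (b ⊗ₜ[k] (1 : A)) = (1 : A) ⊗ₜ[k] b)
variable (hD : ∀ a : A, ψ ((1 : B) ⊗ₜ[k] a) = a ⊗ₜ[k] (1 : B))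
variable (hphiD : ∀ (x : A) (y : B), Dmap (φ (x ⊗ₜ[k] y)) = Coalgebra.counit (R := k) y • x)
variable (hphiC : ∀ (x : A) (y : B), Emap (φ (x ⊗ₜ[k] y)) = Coalgebra.counit (R := k) x • y)

include hD hphiD in
lemma convA : conv ψ φ iA iB = LinearMap.id := by
  apply TensorProduct.ext'
  intro a b
  have ra := Coalgebra.Repr.arbitrary k a
  have rb := Coalgebra.Repr.arbitrary k b
  rw [conv_apply, crossComul_tmul φ a b ra rb]
  simp only [map_sum]
  simp only [termA ψ hD]
  simp only [hphiD, map_smul, smul_eq_mul]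
  have hc := collapse₂' (k := k) ra.index rb.index
    (fun i => Coalgebra.counit (R := k) (ra.right i))
    (fun j => Coalgebra.counit (R := k) (rb.left j))
    (fun i => ra.left i) (fun j => rb.right j)
    (LinearMap.id : A ⊗[k] B →ₗ[k] A ⊗[k] B)
  simp only [LinearMap.id_coe, id_eq] at hc ⊢
  rw [hc, sum_smul_counit_left ra, sum_counit_smul_right rb]

end identities

end CrossAux

namespace CrossAux

variable (ψ : B ⊗[k] A →ₗ[k] A ⊗[k] B) (φ : A ⊗[k] B →ₗ[k] B ⊗[k] A)
variable (S : A →ₗ[k] A) (s : B →ₗ[k] B)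

noncomputable def GB : (A ⊗[k] A) ⊗[k] B →ₗ[k] A ⊗[k] B :=
  ((TensorProduct.mk k A B).flip (1 : B)) ∘ₗ LinearMap.mul' k A ∘ₗ
    TensorProduct.map S (Dmap ∘ₗ φ) ∘ₗ (TensorProduct.assoc k A A B).toLinearMap

@[simp] lemma GB_tmul (x y : A) (z : B) :
    GB φ S ((x ⊗ₜ[k] y) ⊗ₜ[k] z) = (S x * Dmap (φ (y ⊗ₜ[k] z))) ⊗ₜ[k] (1 : B) := by
  simp [GB, LinearMap.mul'_apply]

noncomputable def GC : (A ⊗[k] A) ⊗[k] B →ₗ[k] A ⊗[k] B :=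
  ((TensorProduct.mk k A B).flip (1 : B)) ∘ₗ LinearMap.mul' k A ∘ₗ
    TensorProduct.map LinearMap.id (S ∘ₗ Dmap ∘ₗ φ) ∘ₗ (TensorProduct.assoc k A A B).toLinearMap

@[simp] lemma GC_tmul (x y : A) (z : B) :
    GC φ S ((x ⊗ₜ[k] y) ⊗ₜ[k] z) = (x * S (Dmap (φ (y ⊗ₜ[k] z)))) ⊗ₜ[k] (1 : B) := by
  simp [GC, LinearMap.mul'_apply]

noncomputable def GD : A ⊗[k] (B ⊗[k] B) →ₗ[k] A ⊗[k] B :=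
  (TensorProduct.mk k A B (1 : A)) ∘ₗ LinearMap.mul' k B ∘ₗ
    TensorProduct.map (s ∘ₗ Emap ∘ₗ φ) LinearMap.id ∘ₗ
      (TensorProduct.assoc k A B B).symm.toLinearMap

@[simp] lemma GD_tmul (x : A) (z w : B) :
    GD φ s (x ⊗ₜ[k] (z ⊗ₜ[k] w)) = (1 : A) ⊗ₜ[k] (s (Emap (φ (x ⊗ₜ[k] z))) * w) := by
  simp [GD, LinearMap.mul'_apply]

noncomputable def GE : A ⊗[k] (B ⊗[k] B) →ₗ[k] A ⊗[k] B :=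
  (TensorProduct.mk k A B (1 : A)) ∘ₗ LinearMap.mul' k B ∘ₗ
    TensorProduct.map (Emap ∘ₗ φ) s ∘ₗ (TensorProduct.assoc k A B B).symm.toLinearMap

@[simp] lemma GE_tmul (x : A) (z w : B) :
    GE φ s (x ⊗ₜ[k] (z ⊗ₜ[k] w)) = (1 : A) ⊗ₜ[k] (Emap (φ (x ⊗ₜ[k] z)) * s w) := by
  simp [GE, LinearMap.mul'_apply]

section identities

variable (hC : ∀ b : B, ψ (b ⊗ₜ[k] (1 : A)) = (1 : A) ⊗ₜ[k] b)
variable (hD : ∀ a : A, ψ ((1 : B) ⊗ₜ[k] a) = a ⊗ₜ[k] (1 : B))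
variable (hphiD : ∀ (x : A) (y : B), Dmap (φ (x ⊗ₜ[k] y)) = Coalgebra.counit (R := k) y • x)
variable (hphiC : ∀ (x : A) (y : B), Emap (φ (x ⊗ₜ[k] y)) = Coalgebra.counit (R := k) x • y)

include hD hphiD in
lemma convB (hS1 : LinearMap.mul' k A ∘ₗ
      TensorProduct.map S (LinearMap.id : A →ₗ[k] A) ∘ₗ
      Coalgebra.comul (R := k) (A := A) =
    Algebra.linearMap k A ∘ₗ Coalgebra.counit (R := k) (A := A)) :
    conv ψ φ (jA S) iA = eH := by
  apply TensorProduct.ext'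
  intro a b
  have ra := Coalgebra.Repr.arbitrary k a
  have rb := Coalgebra.Repr.arbitrary k b
  rw [conv_apply, crossComul_tmul φ a b ra rb]
  simp only [map_sum]
  simp only [termB ψ hD S]
  have hc := collapseR (k := k) ra.index rb.index
    (fun j => Coalgebra.counit (R := k) (rb.right j))
    (fun i => ra.left i ⊗ₜ[k] ra.right i) (fun j => rb.left j) (GB φ S)
  simp only [GB_tmul] at hc
  rw [hc, ra.eq, sum_smul_counit_left rb]
  have heval : ∀ (t : A ⊗[k] A) (y : B),
      GB φ S (t ⊗ₜ[k] y) =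
        Coalgebra.counit (R := k) y •
          ((LinearMap.mul' k A (TensorProduct.map S (LinearMap.id : A →ₗ[k] A) t)) ⊗ₜ[k] (1 : B)) := by
    intro t y
    induction t using TensorProduct.induction_on with
    | zero => simp
    | tmul x w =>
      simp only [GB_tmul, hphiD, map_tmul, LinearMap.mul'_apply, LinearMap.id_coe, id_eq,
        mul_smul_comm, smul_tmul']
    | add u v hu hv => simp only [map_add, add_tmul, smul_add, hu, hv]
  rw [heval]
  have h1 := LinearMap.congr_fun hS1 a
  simp only [LinearMap.coe_comp, Function.comp_apply] at h1
  rw [h1, eH_apply, crossCounit_tmul]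
  rw [Algebra.linearMap_apply, Algebra.algebraMap_eq_smul_one, smul_tmul', smul_smul]
  rw [mul_comm]
  exact (smul_tmul' _ _ _).symm

end identities

end CrossAux

namespace CrossAux

variable (ψ : B ⊗[k] A →ₗ[k] A ⊗[k] B) (φ : A ⊗[k] B →ₗ[k] B ⊗[k] A)
variable (S : A →ₗ[k] A) (s : B →ₗ[k] B)
variable (hC : ∀ b : B, ψ (b ⊗ₜ[k] (1 : A)) = (1 : A) ⊗ₜ[k] b)
variable (hD : ∀ a : A, ψ ((1 : B) ⊗ₜ[k] a) = a ⊗ₜ[k] (1 : B))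
variable (hphiD : ∀ (x : A) (y : B), Dmap (φ (x ⊗ₜ[k] y)) = Coalgebra.counit (R := k) y • x)
variable (hphiC : ∀ (x : A) (y : B), Emap (φ (x ⊗ₜ[k] y)) = Coalgebra.counit (R := k) x • y)

include hD hphiD in
lemma convC (hS2 : LinearMap.mul' k A ∘ₗ
      TensorProduct.map (LinearMap.id : A →ₗ[k] A) S ∘ₗ
      Coalgebra.comul (R := k) (A := A) =
    Algebra.linearMap k A ∘ₗ Coalgebra.counit (R := k) (A := A)) :
    conv ψ φ iA (jA S) = eH := by
  apply TensorProduct.ext'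
  intro a b
  have ra := Coalgebra.Repr.arbitrary k a
  have rb := Coalgebra.Repr.arbitrary k b
  rw [conv_apply, crossComul_tmul φ a b ra rb]
  simp only [map_sum]
  simp only [termC ψ hD S]
  have hc := collapseR (k := k) ra.index rb.index
    (fun j => Coalgebra.counit (R := k) (rb.right j))
    (fun i => ra.left i ⊗ₜ[k] ra.right i) (fun j => rb.left j) (GC φ S)
  simp only [GC_tmul] at hc
  rw [hc, ra.eq, sum_smul_counit_left rb]
  have heval : ∀ (t : A ⊗[k] A) (y : B),
      GC φ S (t ⊗ₜ[k] y) =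
        Coalgebra.counit (R := k) y •
          ((LinearMap.mul' k A (TensorProduct.map (LinearMap.id : A →ₗ[k] A) S t)) ⊗ₜ[k] (1 : B)) := by
    intro t y
    induction t using TensorProduct.induction_on with
    | zero => simp
    | tmul x w =>
      simp only [GC_tmul, hphiD, map_tmul, map_smul, LinearMap.mul'_apply, LinearMap.id_coe,
        id_eq, mul_smul_comm, smul_tmul']
    | add u v hu hv => simp only [map_add, add_tmul, smul_add, hu, hv]
  rw [heval]
  have h1 := LinearMap.congr_fun hS2 a
  simp only [LinearMap.coe_comp, Function.comp_apply] at h1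
  rw [h1, eH_apply, crossCounit_tmul]
  rw [Algebra.linearMap_apply, Algebra.algebraMap_eq_smul_one, smul_tmul', smul_smul]
  rw [mul_comm]
  exact (smul_tmul' _ _ _).symm

include hC hphiC in
lemma convD (hs1 : LinearMap.mul' k B ∘ₗ
      TensorProduct.map s (LinearMap.id : B →ₗ[k] B) ∘ₗ
      Coalgebra.comul (R := k) (A := B) =
    Algebra.linearMap k B ∘ₗ Coalgebra.counit (R := k) (A := B)) :
    conv ψ φ (jB s) iB = eH := by
  apply TensorProduct.ext'
  intro a b
  have ra := Coalgebra.Repr.arbitrary k a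
  have rb := Coalgebra.Repr.arbitrary k b
  rw [conv_apply, crossComul_tmul φ a b ra rb]
  simp only [map_sum]
  simp only [termD ψ hC s]
  have hc := collapseL (k := k) ra.index rb.index
    (fun i => Coalgebra.counit (R := k) (ra.left i))
    (fun i => ra.right i) (fun j => rb.left j ⊗ₜ[k] rb.right j) (GD φ s)
  simp only [GD_tmul] at hc
  rw [hc, rb.eq, sum_counit_smul_right ra]
  have heval : ∀ (x : A) (t : B ⊗[k] B),
      GD φ s (x ⊗ₜ[k] t) =
        Coalgebra.counit (R := k) x •
          ((1 : A) ⊗ₜ[k] (LinearMap.mul' k B (TensorProduct.map s (LinearMap.id : B →ₗ[k] B) t))) := by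
    intro x t
    induction t using TensorProduct.induction_on with
    | zero => simp
    | tmul z w =>
      simp only [GD_tmul, hphiC, map_tmul, map_smul, LinearMap.mul'_apply, LinearMap.id_coe,
        id_eq, smul_mul_assoc, tmul_smul]
    | add u v hu hv => simp only [map_add, tmul_add, smul_add, hu, hv]
  rw [heval]
  have h1 := LinearMap.congr_fun hs1 b
  simp only [LinearMap.coe_comp, Function.comp_apply] at h1
  rw [h1, eH_apply, crossCounit_tmul]
  rw [Algebra.linearMap_apply, Algebra.algebraMap_eq_smul_one, tmul_smul, smul_smul]

include hC hphiC in
lemma convE (hs2 : LinearMap.mul' k B ∘ₗ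
      TensorProduct.map (LinearMap.id : B →ₗ[k] B) s ∘ₗ
      Coalgebra.comul (R := k) (A := B) =
    Algebra.linearMap k B ∘ₗ Coalgebra.counit (R := k) (A := B)) :
    conv ψ φ iB (jB s) = eH := by
  apply TensorProduct.ext'
  intro a b
  have ra := Coalgebra.Repr.arbitrary k a
  have rb := Coalgebra.Repr.arbitrary k b
  rw [conv_apply, crossComul_tmul φ a b ra rb]
  simp only [map_sum]
  simp only [termE ψ hC s]
  have hc := collapseL (k := k) ra.index rb.index
    (fun i => Coalgebra.counit (R := k) (ra.left i))
    (fun i => ra.right i) (fun j => rb.left j ⊗ₜ[k] rb.right j) (GE φ s)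
  simp only [GE_tmul] at hc
  rw [hc, rb.eq, sum_counit_smul_right ra]
  have heval : ∀ (x : A) (t : B ⊗[k] B),
      GE φ s (x ⊗ₜ[k] t) =
        Coalgebra.counit (R := k) x •
          ((1 : A) ⊗ₜ[k] (LinearMap.mul' k B (TensorProduct.map (LinearMap.id : B →ₗ[k] B) s t))) := by
    intro x t
    induction t using TensorProduct.induction_on with
    | zero => simp
    | tmul z w =>
      simp only [GE_tmul, hphiC, map_tmul, map_smul, LinearMap.mul'_apply, LinearMap.id_coe,
        id_eq, smul_mul_assoc, tmul_smul]
    | add u v hu hv => simp only [map_add, tmul_add, smul_add, hu, hv]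
  rw [heval]
  have h1 := LinearMap.congr_fun hs2 b
  simp only [LinearMap.coe_comp, Function.comp_apply] at h1
  rw [h1, eH_apply, crossCounit_tmul]
  rw [Algebra.linearMap_apply, Algebra.algebraMap_eq_smul_one, tmul_smul, smul_smul]

lemma convF : conv ψ φ (jB s) (jA S) = ψ ∘ₗ TensorProduct.map s S ∘ₗ φ := by
  apply TensorProduct.ext'
  intro a b
  have ra := Coalgebra.Repr.arbitrary k a
  have rb := Coalgebra.Repr.arbitrary k b
  rw [conv_apply, crossComul_tmul φ a b ra rb]
  simp only [map_sum]
  simp only [termF ψ S s]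
  have hc := collapse₂ (k := k) ra.index rb.index
    (fun i => Coalgebra.counit (R := k) (ra.left i))
    (fun j => Coalgebra.counit (R := k) (rb.right j))
    (fun i => ra.right i) (fun j => rb.left j)
    (ψ ∘ₗ TensorProduct.map s S ∘ₗ φ)
  simp only [LinearMap.coe_comp, Function.comp_apply] at hc
  rw [hc, sum_counit_smul_right ra, sum_smul_counit_left rb]
  simp [LinearMap.coe_comp, Function.comp_apply]

end CrossAux

namespace CrossAux

variable (ψ : B ⊗[k] A →ₗ[k] A ⊗[k] B) (φ : A ⊗[k] B →ₗ[k] B ⊗[k] A)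

lemma conv_assoc
    (h1 : ∀ x y z : A ⊗[k] B,
      crossMul ψ (crossMul ψ (x ⊗ₜ[k] y) ⊗ₜ[k] z) =
        crossMul ψ (x ⊗ₜ[k] crossMul ψ (y ⊗ₜ[k] z)))
    (h4 : (TensorProduct.assoc k (A ⊗[k] B) (A ⊗[k] B) (A ⊗[k] B)).toLinearMap ∘ₗ
      TensorProduct.map (crossComul φ) (LinearMap.id : A ⊗[k] B →ₗ[k] A ⊗[k] B) ∘ₗ
        crossComul φ =
      TensorProduct.map (LinearMap.id : A ⊗[k] B →ₗ[k] A ⊗[k] B) (crossComul φ) ∘ₗ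
        crossComul φ)
    (f g h : A ⊗[k] B →ₗ[k] A ⊗[k] B) :
    conv ψ φ (conv ψ φ f g) h = conv ψ φ f (conv ψ φ g h) := by
  have hM : crossMul ψ ∘ₗ TensorProduct.map (crossMul ψ) (LinearMap.id) =
      crossMul ψ ∘ₗ TensorProduct.map (LinearMap.id) (crossMul ψ) ∘ₗ
        (TensorProduct.assoc k (A ⊗[k] B) (A ⊗[k] B) (A ⊗[k] B)).toLinearMap := by
    apply TensorProduct.ext_threefold
    intro x y z
    simpa using h1 x y z
  have hnat : (TensorProduct.assoc k (A ⊗[k] B) (A ⊗[k] B) (A ⊗[k] B)).toLinearMap ∘ₗ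
      TensorProduct.map (TensorProduct.map f g) h =
      TensorProduct.map f (TensorProduct.map g h) ∘ₗ
        (TensorProduct.assoc k (A ⊗[k] B) (A ⊗[k] B) (A ⊗[k] B)).toLinearMap := by
    apply TensorProduct.ext_threefold
    intro x y z
    simp
  apply LinearMap.ext
  intro x
  have d1 : TensorProduct.map (conv ψ φ f g) h =
      TensorProduct.map (crossMul ψ) LinearMap.id ∘ₗ
        TensorProduct.map (TensorProduct.map f g) h ∘ₗ
          TensorProduct.map (crossComul φ) LinearMap.id := by
    rw [← TensorProduct.map_comp, ← TensorProduct.map_comp]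
    rfl
  have d2 : TensorProduct.map f (conv ψ φ g h) =
      TensorProduct.map LinearMap.id (crossMul ψ) ∘ₗ
        TensorProduct.map f (TensorProduct.map g h) ∘ₗ
          TensorProduct.map LinearMap.id (crossComul φ) := by
    rw [← TensorProduct.map_comp, ← TensorProduct.map_comp]
    rfl
  rw [conv_apply, conv_apply, d1, d2]
  simp only [LinearMap.coe_comp, Function.comp_apply]
  have hco := LinearMap.congr_fun h4 x
  simp only [LinearMap.coe_comp, LinearEquiv.coe_coe, Function.comp_apply] at hco
  have hco' : TensorProduct.map (crossComul φ) LinearMap.id (crossComul φ x) =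
      (TensorProduct.assoc k (A ⊗[k] B) (A ⊗[k] B) (A ⊗[k] B)).symm
        (TensorProduct.map LinearMap.id (crossComul φ) (crossComul φ x)) := by
    rw [← hco, LinearEquiv.symm_apply_apply]
  rw [hco']
  have hnat' : TensorProduct.map (TensorProduct.map f g) h
      ((TensorProduct.assoc k (A ⊗[k] B) (A ⊗[k] B) (A ⊗[k] B)).symm
        (TensorProduct.map LinearMap.id (crossComul φ) (crossComul φ x))) =
      (TensorProduct.assoc k (A ⊗[k] B) (A ⊗[k] B) (A ⊗[k] B)).symm
        (TensorProduct.map f (TensorProduct.map g h)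
          (TensorProduct.map LinearMap.id (crossComul φ) (crossComul φ x))) := by
    have := LinearMap.congr_fun hnat
      ((TensorProduct.assoc k (A ⊗[k] B) (A ⊗[k] B) (A ⊗[k] B)).symm
        (TensorProduct.map LinearMap.id (crossComul φ) (crossComul φ x)))
    simp only [LinearMap.coe_comp, LinearEquiv.coe_coe, Function.comp_apply,
      LinearEquiv.apply_symm_apply] at this
    rw [LinearEquiv.eq_symm_apply]
    exact this
  rw [hnat']
  have hM' := LinearMap.congr_fun hM
    ((TensorProduct.assoc k (A ⊗[k] B) (A ⊗[k] B) (A ⊗[k] B)).symm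
      (TensorProduct.map f (TensorProduct.map g h)
        (TensorProduct.map LinearMap.id (crossComul φ) (crossComul φ x))))
  simp only [LinearMap.coe_comp, LinearEquiv.coe_coe, Function.comp_apply,
    LinearEquiv.apply_symm_apply] at hM'
  rw [hM']

lemma conv_unit_left
    (h2 : ∀ x : A ⊗[k] B, crossMul ψ (((1 : A) ⊗ₜ[k] (1 : B)) ⊗ₜ[k] x) = x)
    (h5 : (TensorProduct.lid k (A ⊗[k] B)).toLinearMap ∘ₗ
      TensorProduct.map (crossCounit (k := k) (A := A) (B := B))
        (LinearMap.id : A ⊗[k] B →ₗ[k] A ⊗[k] B) ∘ₗ crossComul φ = LinearMap.id)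
    (f : A ⊗[k] B →ₗ[k] A ⊗[k] B) : conv ψ φ eH f = f := by
  apply LinearMap.ext
  intro x
  rw [conv_apply]
  have d : TensorProduct.map (eH (k := k) (A := A) (B := B)) f =
      TensorProduct.map (LinearMap.toSpanSingleton k (A ⊗[k] B) ((1 : A) ⊗ₜ[k] (1 : B)))
          LinearMap.id ∘ₗ
        TensorProduct.map LinearMap.id f ∘ₗ
          TensorProduct.map (crossCounit (k := k) (A := A) (B := B)) LinearMap.id := by
    rw [← TensorProduct.map_comp, ← TensorProduct.map_comp]
    rfl
  rw [d]
  simp only [LinearMap.coe_comp, Function.comp_apply]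
  have hU : ∀ y : k ⊗[k] (A ⊗[k] B),
      crossMul ψ (TensorProduct.map
        (LinearMap.toSpanSingleton k (A ⊗[k] B) ((1 : A) ⊗ₜ[k] (1 : B))) LinearMap.id y) =
      (TensorProduct.lid k (A ⊗[k] B)) y := by
    intro y
    induction y using TensorProduct.induction_on with
    | zero => simp
    | tmul c z =>
      simp only [map_tmul, LinearMap.toSpanSingleton_apply, LinearMap.id_coe, id_eq, lid_tmul]
      rw [← smul_tmul', map_smul, h2]
    | add u v hu hv => simp only [map_add, hu, hv]
  rw [hU]
  have hLid : ∀ y : k ⊗[k] (A ⊗[k] B),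
      (TensorProduct.lid k (A ⊗[k] B)) (TensorProduct.map LinearMap.id f y) =
        f ((TensorProduct.lid k (A ⊗[k] B)) y) := by
    intro y
    induction y using TensorProduct.induction_on with
    | zero => simp
    | tmul c z => simp
    | add u v hu hv => simp only [map_add, hu, hv]
  rw [hLid]
  have h5' := LinearMap.congr_fun h5 x
  simp only [LinearMap.coe_comp, LinearEquiv.coe_coe, Function.comp_apply, LinearMap.id_coe,
    id_eq] at h5'
  rw [h5']

lemma conv_unit_right
    (h3 : ∀ x : A ⊗[k] B, crossMul ψ (x ⊗ₜ[k] ((1 : A) ⊗ₜ[k] (1 : B))) = x)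
    (h6 : (TensorProduct.rid k (A ⊗[k] B)).toLinearMap ∘ₗ
      TensorProduct.map (LinearMap.id : A ⊗[k] B →ₗ[k] A ⊗[k] B)
        (crossCounit (k := k) (A := A) (B := B)) ∘ₗ crossComul φ = LinearMap.id)
    (f : A ⊗[k] B →ₗ[k] A ⊗[k] B) : conv ψ φ f eH = f := by
  apply LinearMap.ext
  intro x
  rw [conv_apply]
  have d : TensorProduct.map f (eH (k := k) (A := A) (B := B)) =
      TensorProduct.map LinearMap.id
          (LinearMap.toSpanSingleton k (A ⊗[k] B) ((1 : A) ⊗ₜ[k] (1 : B))) ∘ₗ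
        TensorProduct.map f LinearMap.id ∘ₗ
          TensorProduct.map LinearMap.id (crossCounit (k := k) (A := A) (B := B)) := by
    rw [← TensorProduct.map_comp, ← TensorProduct.map_comp]
    rfl
  rw [d]
  simp only [LinearMap.coe_comp, Function.comp_apply]
  have hU : ∀ y : (A ⊗[k] B) ⊗[k] k,
      crossMul ψ (TensorProduct.map LinearMap.id
        (LinearMap.toSpanSingleton k (A ⊗[k] B) ((1 : A) ⊗ₜ[k] (1 : B))) y) =
      (TensorProduct.rid k (A ⊗[k] B)) y := by
    intro y
    induction y using TensorProduct.induction_on with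
    | zero => simp
    | tmul z c =>
      simp only [map_tmul, LinearMap.toSpanSingleton_apply, LinearMap.id_coe, id_eq, rid_tmul]
      rw [tmul_smul, map_smul, h3]
    | add u v hu hv => simp only [map_add, hu, hv]
  rw [hU]
  have hRid : ∀ y : (A ⊗[k] B) ⊗[k] k,
      (TensorProduct.rid k (A ⊗[k] B)) (TensorProduct.map f LinearMap.id y) =
        f ((TensorProduct.rid k (A ⊗[k] B)) y) := by
    intro y
    induction y using TensorProduct.induction_on with
    | zero => simp
    | tmul z c => simp
    | add u v hu hv => simp only [map_add, hu, hv]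
  rw [hRid]
  have h6' := LinearMap.congr_fun h6 x
  simp only [LinearMap.coe_comp, LinearEquiv.coe_coe, Function.comp_apply, LinearMap.id_coe,
    id_eq] at h6'
  rw [h6']

end CrossAux

/-- if `id_A` and `id_B` are convolution invertible, then the cross product
bialgebra `A #_ψ^φ B` is a Hopf algebra with antipode `ψ ∘ (s ⊗ S) ∘ φ`. -/
theorem crossBialgebra_hopf_of_convInvertible (ψ : B ⊗[k] A →ₗ[k] A ⊗[k] B)
    (φ : A ⊗[k] B →ₗ[k] B ⊗[k] A) (H : IsCrossBialgebra ψ φ)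
    (S : A →ₗ[k] A) (s : B →ₗ[k] B)
    (hS1 : LinearMap.mul' k A ∘ₗ
        TensorProduct.map S (LinearMap.id : A →ₗ[k] A) ∘ₗ
        Coalgebra.comul (R := k) (A := A) =
      Algebra.linearMap k A ∘ₗ Coalgebra.counit (R := k) (A := A))
    (hS2 : LinearMap.mul' k A ∘ₗ
        TensorProduct.map (LinearMap.id : A →ₗ[k] A) S ∘ₗ
        Coalgebra.comul (R := k) (A := A) =
      Algebra.linearMap k A ∘ₗ Coalgebra.counit (R := k) (A := A))
    (hs1 : LinearMap.mul' k B ∘ₗ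
        TensorProduct.map s (LinearMap.id : B →ₗ[k] B) ∘ₗ
        Coalgebra.comul (R := k) (A := B) =
      Algebra.linearMap k B ∘ₗ Coalgebra.counit (R := k) (A := B))
    (hs2 : LinearMap.mul' k B ∘ₗ
        TensorProduct.map (LinearMap.id : B →ₗ[k] B) s ∘ₗ
        Coalgebra.comul (R := k) (A := B) =
      Algebra.linearMap k B ∘ₗ Coalgebra.counit (R := k) (A := B)) :
    (∀ h : A ⊗[k] B,
      crossMul ψ ((TensorProduct.map (ψ ∘ₗ TensorProduct.map s S ∘ₗ φ)
          (LinearMap.id : A ⊗[k] B →ₗ[k] A ⊗[k] B)) (crossComul φ h)) =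
        crossCounit (k := k) (A := A) (B := B) h • ((1 : A) ⊗ₜ[k] (1 : B))) ∧
    (∀ h : A ⊗[k] B,
      crossMul ψ ((TensorProduct.map (LinearMap.id : A ⊗[k] B →ₗ[k] A ⊗[k] B)
          (ψ ∘ₗ TensorProduct.map s S ∘ₗ φ)) (crossComul φ h)) =
        crossCounit (k := k) (A := A) (B := B) h • ((1 : A) ⊗ₜ[k] (1 : B))) := by
  obtain ⟨h1, h2, h3, h4, h5, h6, h7, h8, h9, h10⟩ := H
  have hpsiC := CrossAux.psiC_of ψ h3
  have hpsiD := CrossAux.psiD_of ψ h2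
  have hphiD := CrossAux.phiD_of φ h5
  have hphiC := CrossAux.phiC_of φ h6
  have hA := CrossAux.convA ψ φ hpsiD hphiD
  have hB := CrossAux.convB ψ φ S hpsiD hphiD hS1
  have hCc := CrossAux.convC ψ φ S hpsiD hphiD hS2
  have hDd := CrossAux.convD ψ φ s hpsiC hphiC hs1
  have hE := CrossAux.convE ψ φ s hpsiC hphiC hs2
  have hF := CrossAux.convF ψ φ S s
  have hassoc := CrossAux.conv_assoc ψ φ h1 h4
  have hul := CrossAux.conv_unit_left ψ φ h2 h5
  have key1 : CrossAux.conv ψ φ (ψ ∘ₗ TensorProduct.map s S ∘ₗ φ) LinearMap.id =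
      CrossAux.eH := by
    rw [← hF, ← hA]
    calc CrossAux.conv ψ φ (CrossAux.conv ψ φ (CrossAux.jB s) (CrossAux.jA S))
          (CrossAux.conv ψ φ CrossAux.iA CrossAux.iB)
        = CrossAux.conv ψ φ (CrossAux.jB s)
            (CrossAux.conv ψ φ (CrossAux.jA S)
              (CrossAux.conv ψ φ CrossAux.iA CrossAux.iB)) := hassoc _ _ _
      _ = CrossAux.conv ψ φ (CrossAux.jB s)
            (CrossAux.conv ψ φ (CrossAux.conv ψ φ (CrossAux.jA S) CrossAux.iA)
              CrossAux.iB) := by rw [hassoc (CrossAux.jA S) CrossAux.iA CrossAux.iB]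
      _ = CrossAux.conv ψ φ (CrossAux.jB s) (CrossAux.conv ψ φ CrossAux.eH CrossAux.iB) := by
            rw [hB]
      _ = CrossAux.conv ψ φ (CrossAux.jB s) CrossAux.iB := by rw [hul]
      _ = CrossAux.eH := hDd
  have key2 : CrossAux.conv ψ φ LinearMap.id (ψ ∘ₗ TensorProduct.map s S ∘ₗ φ) =
      CrossAux.eH := by
    rw [← hF, ← hA]
    calc CrossAux.conv ψ φ (CrossAux.conv ψ φ CrossAux.iA CrossAux.iB)
          (CrossAux.conv ψ φ (CrossAux.jB s) (CrossAux.jA S))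
        = CrossAux.conv ψ φ CrossAux.iA
            (CrossAux.conv ψ φ CrossAux.iB
              (CrossAux.conv ψ φ (CrossAux.jB s) (CrossAux.jA S))) := hassoc _ _ _
      _ = CrossAux.conv ψ φ CrossAux.iA
            (CrossAux.conv ψ φ (CrossAux.conv ψ φ CrossAux.iB (CrossAux.jB s))
              (CrossAux.jA S)) := by rw [hassoc CrossAux.iB (CrossAux.jB s) (CrossAux.jA S)]
      _ = CrossAux.conv ψ φ CrossAux.iA
            (CrossAux.conv ψ φ CrossAux.eH (CrossAux.jA S)) := by rw [hE]
      _ = CrossAux.conv ψ φ CrossAux.iA (CrossAux.jA S) := by rw [hul]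
      _ = CrossAux.eH := hCc
  constructor
  · intro x
    have hx := LinearMap.congr_fun key1 x
    rw [CrossAux.conv_apply, CrossAux.eH_apply] at hx
    exact hx
  · intro x
    have hx := LinearMap.congr_fun key2 x
    rw [CrossAux.conv_apply, CrossAux.eH_apply] at hx
    exact hx
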